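/- arXiv:1403.0716 — 6 statements merged into one kernel-verified Lean document; each statement's English description precedes it below -/
import Mathlib

section
/- Let c > 0, let α, β be real numbers, and let x ≥ c. Then ∫_c^x y^{-α} (x+c−y)^{-β} dy = (1/(c(x+c)))^{α+β−1} · ∫_c^x (y+c)^{α+β−2} (c^α y^{-α} + c^β y^{-β}) dy. -/
open intervalIntegral Real Set MeasureTheory

private lemma cont_aux {a b α β s : ℝ} (ha : 0 < a) (hbs : b < s) :
    ContinuousOn (fun t : ℝ => t ^ (-α) * (s - t) ^ (-β)) (Set.Icc a b) := by
  intro t ht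
  have h1 : t ≠ 0 := by nlinarith [ht.1]
  have h2 : s - t ≠ 0 := by nlinarith [ht.2]
  apply ContinuousAt.continuousWithinAt
  exact (Real.continuousAt_rpow_const t (-α) (Or.inl h1)).mul
    ((Real.continuousAt_rpow_const (s - t) (-β) (Or.inl h2)).comp
      ((continuous_const.sub continuous_id).continuousAt))

private lemma subst_lemma (c x α β : ℝ) (hc : 0 < c) (hx : c ≤ x) :
    ∫ t in ((x+c)/2)..x, t ^ (-α) * ((x+c) - t) ^ (-β)
      = c ^ (1-β) * (x+c) ^ (1-α-β) * ∫ y in c..x, (y+c) ^ (α+β-2) * y ^ (-α) := by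
  set s := x + c with hsdef
  have hs : (0:ℝ) < s := by linarith
  have huIcc : uIcc c x = Icc c x := uIcc_of_le hx
  have hne : ∀ y ∈ Icc c x, y + c ≠ 0 := fun y hy => by nlinarith [hy.1]
  have hφ : ∀ y ∈ uIcc c x, HasDerivAt (fun y => s*y/(y+c)) (s*c/(y+c)^2) y := by
    intro y hy
    rw [huIcc] at hy
    have h : HasDerivAt (fun y => s*y/(y+c)) ((s*1*(y+c) - s*y*1)/(y+c)^2) y := (((hasDerivAt_id y).const_mul s).div ((hasDerivAt_id y).add_const c)
      (hne y hy))
    convert h using 1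
    ring
  have himg : (fun y => s*y/(y+c)) '' uIcc c x ⊆ Icc c x := by
    rw [huIcc]
    rintro _ ⟨y, hy, rfl⟩
    have h1 : 0 < y + c := by nlinarith [hy.1]
    constructor
    · rw [le_div_iff₀ h1]; nlinarith [hy.1, hy.2]
    · rw [div_le_iff₀ h1]; nlinarith [hy.2]
  have key : (∫ y in c..x, (s*c/(y+c)^2) • ((fun t : ℝ => t ^ (-α) * (s - t) ^ (-β)) ∘
      (fun y => s*y/(y+c))) y)
      = ∫ t in (s*c/(c+c))..(s*x/(x+c)), t ^ (-α) * (s - t) ^ (-β) := by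
    exact integral_comp_smul_deriv' hφ
      (by
        apply ContinuousOn.div continuousOn_const
        · exact (continuous_id.add continuous_const).pow 2 |>.continuousOn
        · intro y hy; rw [huIcc] at hy; exact pow_ne_zero 2 (hne y hy))
      ((cont_aux hc (by rw [hsdef]; linarith)).mono himg)
  have hca : s*c/(c+c) = s/2 := by field_simp; ring
  have hcb : s*x/(x+c) = x := by rw [← hsdef]; field_simp
  rw [hca, hcb] at key
  rw [← key]
  rw [← intervalIntegral.integral_const_mul]
  apply intervalIntegral.integral_congr
  intro y hy
  rw [huIcc] at hy
  have hy0 : 0 < y := lt_of_lt_of_le hc hy.1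
  have hyc : 0 < y + c := by linarith
  have h1 : s - s*y/(y+c) = s*c/(y+c) := by field_simp; ring
  simp only [Function.comp, smul_eq_mul, h1]
  have e1 : (s*y/(y+c)) ^ (-α) = s ^ (-α) * y ^ (-α) / (y+c) ^ (-α) := by
    rw [Real.div_rpow (by positivity) hyc.le, Real.mul_rpow hs.le hy0.le]
  have e2 : (s*c/(y+c)) ^ (-β) = s ^ (-β) * c ^ (-β) / (y+c) ^ (-β) := by
    rw [Real.div_rpow (by positivity) hyc.le, Real.mul_rpow hs.le hc.le]
  rw [e1, e2]
  have e3 : c ^ (1-β) = c * c ^ (-β) := by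
    rw [show (1-β) = 1 + -β by ring, Real.rpow_add hc, Real.rpow_one]
  have e4 : s ^ (1-α-β) = s * (s ^ (-α) * s ^ (-β)) := by
    rw [show (1-α-β) = 1 + -α + -β by ring, Real.rpow_add hs, Real.rpow_add hs,
      Real.rpow_one, mul_assoc]
  have e5 : (y+c) ^ (α+β-2) = (y+c) ^ α * (y+c) ^ β / (y+c)^2 := by
    rw [← Real.rpow_add hyc, ← Real.rpow_natCast (y+c) 2, ← Real.rpow_sub hyc]
    norm_num
  have e6 : (y+c) ^ (-α) = ((y+c) ^ α)⁻¹ := by rw [Real.rpow_neg hyc.le]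
  have e7 : (y+c) ^ (-β) = ((y+c) ^ β)⁻¹ := by rw [Real.rpow_neg hyc.le]
  rw [e3, e4, e5, e6, e7]
  have hpa : (0:ℝ) < (y+c) ^ α := Real.rpow_pos_of_pos hyc α
  have hpb : (0:ℝ) < (y+c) ^ β := Real.rpow_pos_of_pos hyc β
  field_simp

theorem stmt_3 (c α β x : ℝ) (hc : 0 < c) (hx : c ≤ x) :
    ∫ y in c..x, y ^ (-α) * (x + c - y) ^ (-β) =
      (1 / (c * (x + c))) ^ (α + β - 1) *
        ∫ y in c..x, (y + c) ^ (α + β - 2) * (c ^ α * y ^ (-α) + c ^ β * y ^ (-β)) := by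
  set s := x + c with hsdef
  have hs : (0:ℝ) < s := by linarith
  have hm1 : c ≤ s/2 := by rw [hsdef]; linarith
  have hm2 : s/2 ≤ x := by rw [hsdef]; linarith
  -- split LHS
  have hcont : ContinuousOn (fun t : ℝ => t ^ (-α) * (s - t) ^ (-β)) (Set.Icc c x) :=
    cont_aux hc (by rw [hsdef]; linarith)
  have hint1 : IntervalIntegrable (fun t : ℝ => t ^ (-α) * (s - t) ^ (-β)) volume c (s/2) := by
    apply ContinuousOn.intervalIntegrable
    rw [uIcc_of_le hm1]
    exact hcont.mono (Icc_subset_Icc le_rfl hm2)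
  have hint2 : IntervalIntegrable (fun t : ℝ => t ^ (-α) * (s - t) ^ (-β)) volume (s/2) x := by
    apply ContinuousOn.intervalIntegrable
    rw [uIcc_of_le hm2]
    exact hcont.mono (Icc_subset_Icc hm1 le_rfl)
  have hsplit : (∫ y in c..x, y ^ (-α) * (s - y) ^ (-β))
      = (∫ y in c..(s/2), y ^ (-α) * (s - y) ^ (-β))
        + ∫ y in (s/2)..x, y ^ (-α) * (s - y) ^ (-β) :=
    (intervalIntegral.integral_add_adjacent_intervals hint1 hint2).symm
  -- reflect first piece
  have hrefl : (∫ y in c..(s/2), y ^ (-α) * (s - y) ^ (-β))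
      = ∫ y in (s/2)..x, y ^ (-β) * (s - y) ^ (-α) := by
    have := intervalIntegral.integral_comp_sub_left (a := c) (b := s/2)
      (fun t : ℝ => t ^ (-β) * (s - t) ^ (-α)) s
    have h1 : s - s/2 = s/2 := by ring
    have h2 : s - c = x := by rw [hsdef]; ring
    rw [h1, h2] at this
    rw [← this]
    apply intervalIntegral.integral_congr
    intro y _
    simp only []
    rw [sub_sub_cancel]
    ring
  have key1 := subst_lemma c x α β hc hx
  have key2 := subst_lemma c x β α hc hx
  rw [← hsdef] at key1 key2
  have hba : β + α - 2 = α + β - 2 := by ring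
  have hba2 : (1:ℝ) - β - α = 1 - α - β := by ring
  rw [hba, hba2] at key2
  rw [hsplit, hrefl, key1, key2]
  -- RHS side
  have hintA : IntervalIntegrable (fun y : ℝ => (y+c) ^ (α+β-2) * y ^ (-α)) volume c x := by
    apply ContinuousOn.intervalIntegrable
    rw [uIcc_of_le hx]
    intro y hy
    have h1 : y + c ≠ 0 := by nlinarith [hy.1]
    have h2 : y ≠ 0 := by nlinarith [hy.1]
    apply ContinuousAt.continuousWithinAt
    have hA : ContinuousAt (fun z : ℝ => (z+c) ^ (α+β-2)) y :=
      ContinuousAt.rpow_const ((continuous_id.add continuous_const).continuousAt) (Or.inl h1)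
    have hB : ContinuousAt (fun z : ℝ => z ^ (-α)) y :=
      Real.continuousAt_rpow_const y _ (Or.inl h2)
    exact hA.mul hB
  have hintB : IntervalIntegrable (fun y : ℝ => (y+c) ^ (α+β-2) * y ^ (-β)) volume c x := by
    apply ContinuousOn.intervalIntegrable
    rw [uIcc_of_le hx]
    intro y hy
    have h1 : y + c ≠ 0 := by nlinarith [hy.1]
    have h2 : y ≠ 0 := by nlinarith [hy.1]
    apply ContinuousAt.continuousWithinAt
    have hA : ContinuousAt (fun z : ℝ => (z+c) ^ (α+β-2)) y :=
      ContinuousAt.rpow_const ((continuous_id.add continuous_const).continuousAt) (Or.inl h1)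
    have hB : ContinuousAt (fun z : ℝ => z ^ (-β)) y :=
      Real.continuousAt_rpow_const y _ (Or.inl h2)
    exact hA.mul hB
  have hexp : (∫ y in c..x, (y + c) ^ (α + β - 2) * (c ^ α * y ^ (-α) + c ^ β * y ^ (-β)))
      = c ^ α * (∫ y in c..x, (y+c) ^ (α+β-2) * y ^ (-α))
        + c ^ β * ∫ y in c..x, (y+c) ^ (α+β-2) * y ^ (-β) := by
    rw [← intervalIntegral.integral_const_mul, ← intervalIntegral.integral_const_mul,
      ← intervalIntegral.integral_add (hintA.const_mul _) (hintB.const_mul _)]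
    apply intervalIntegral.integral_congr
    intro y _
    ring
  rw [hexp]
  have hfac : (1 / (c * s)) ^ (α + β - 1) = c ^ (1-α-β) * s ^ (1-α-β) := by
    have hq : -(α+β-1) = 1-α-β := by ring
    rw [one_div, Real.inv_rpow (by positivity), ← Real.rpow_neg (by positivity), hq,
      Real.mul_rpow hc.le hs.le]
  have ha : c ^ (1-α-β) * c ^ α = c ^ (1-β) := by
    rw [← Real.rpow_add hc]; congr 1; ring
  have hb : c ^ (1-α-β) * c ^ β = c ^ (1-α) := by
    rw [← Real.rpow_add hc]; congr 1; ring
  rw [hfac, ← ha, ← hb]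
  ring
end

section
/- Let 0 < ν < 1. Then ∫_1^∞ ((v+1)^{2ν} − v^{2ν}) / v^{ν+1} dv = ∫_{1/2}^1 (1 − x^{2ν}) / (x^{ν+1} (1−x)^{ν+1}) dx, both integrals being finite. -/
open MeasureTheory Set

-- MVT bound: for v ≥ 1, (v+1)^(2ν) - v^(2ν) ≤ 4ν v^(2ν-1)
lemma aux_mvt (ν : ℝ) (h0 : 0 < ν) (h1 : ν < 1) {v : ℝ} (hv : 1 ≤ v) :
    (v + 1) ^ (2 * ν) - v ^ (2 * ν) ≤ 4 * ν * v ^ (2 * ν - 1) := by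
  have hv0 : (0:ℝ) < v := by linarith
  obtain ⟨c, hc, hceq⟩ := exists_hasDerivAt_eq_slope (fun t => t ^ (2*ν))
      (fun t => 2*ν * t ^ (2*ν - 1)) (by linarith : v < v + 1)
      (by
        intro t ht
        have ht0 : (0:ℝ) < t := lt_of_lt_of_le hv0 ht.1
        exact (Real.continuousAt_rpow_const t (2*ν) (Or.inl ht0.ne')).continuousWithinAt)
      (by
        intro t ht
        exact Real.hasDerivAt_rpow_const (Or.inl (by linarith [ht.1] : t ≠ 0)))
  have hc0 : 0 < c := lt_trans hv0 hc.1
  have hkey : c ^ (2*ν - 1) ≤ 2 * v ^ (2*ν - 1) := by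
    rcases le_or_gt 0 (2*ν - 1) with h | h
    · calc c ^ (2*ν-1) ≤ (2*v) ^ (2*ν-1) :=
            Real.rpow_le_rpow hc0.le (by linarith [hc.2]) h
        _ = 2 ^ (2*ν-1) * v ^ (2*ν-1) := Real.mul_rpow (by norm_num) hv0.le
        _ ≤ 2 * v ^ (2*ν-1) := by
            have : (2:ℝ) ^ (2*ν-1) ≤ 2 ^ (1:ℝ) :=
              Real.rpow_le_rpow_of_exponent_le (by norm_num) (by linarith)
            have hvp : 0 ≤ v ^ (2*ν-1) := Real.rpow_nonneg hv0.le _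
            nlinarith [Real.rpow_one (2:ℝ)]
    · have := Real.rpow_le_rpow_of_nonpos hv0 hc.1.le h.le
      have hvp : 0 ≤ v ^ (2*ν-1) := Real.rpow_nonneg hv0.le _
      linarith
  have : (v+1) ^ (2*ν) - v ^ (2*ν) = 2*ν*c^(2*ν-1) := by
    rw [hceq]; ring_nf
  rw [this]
  nlinarith

lemma aux_intV (ν : ℝ) (h0 : 0 < ν) (h1 : ν < 1) :
    IntegrableOn (fun v : ℝ => ((v + 1) ^ (2 * ν) - v ^ (2 * ν)) / v ^ (ν + 1))
        (Set.Ici 1) := by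
  have hmeas : AEStronglyMeasurable
      (fun v : ℝ => ((v + 1) ^ (2 * ν) - v ^ (2 * ν)) / v ^ (ν + 1))
      (volume.restrict (Set.Ici 1)) := by
    apply ContinuousOn.aestronglyMeasurable _ measurableSet_Ici
    intro v hv
    have hv0 : (0:ℝ) < v := lt_of_lt_of_le one_pos hv
    apply ContinuousWithinAt.div
    · exact (((continuousWithinAt_id.add continuousWithinAt_const).rpow_const
        (Or.inr (by linarith))).sub
        (continuousWithinAt_id.rpow_const (Or.inl hv0.ne')))
    · exact continuousWithinAt_id.rpow_const (Or.inl hv0.ne')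
    · exact (Real.rpow_pos_of_pos hv0 _).ne'
  have hbound : IntegrableOn (fun v : ℝ => 4 * ν * v ^ (ν - 2)) (Set.Ici 1) := by
    rw [integrableOn_Ici_iff_integrableOn_Ioi]
    exact (integrableOn_Ioi_rpow_of_lt (by linarith) one_pos).const_mul _
  refine Integrable.mono' hbound hmeas ?_
  rw [ae_restrict_iff' measurableSet_Ici]
  filter_upwards with v
  intro hv
  have hv0 : (0:ℝ) < v := lt_of_lt_of_le one_pos hv
  have hd : (0:ℝ) < v ^ (ν + 1) := Real.rpow_pos_of_pos hv0 _
  have hnum : 0 ≤ (v + 1) ^ (2 * ν) - v ^ (2 * ν) := by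
    have := Real.rpow_le_rpow hv0.le (by linarith : v ≤ v + 1) (by positivity : (0:ℝ) ≤ 2*ν)
    linarith
  rw [Real.norm_eq_abs, abs_of_nonneg (by positivity)]
  have hmvt := aux_mvt ν h0 h1 hv
  have hid : v ^ (2*ν - 1) / v ^ (ν + 1) = v ^ (ν - 2) := by
    rw [← Real.rpow_sub hv0]; ring_nf
  calc ((v + 1) ^ (2 * ν) - v ^ (2 * ν)) / v ^ (ν + 1)
      ≤ (4 * ν * v ^ (2*ν - 1)) / v ^ (ν + 1) := by
        gcongr
    _ = 4 * ν * v ^ (ν - 2) := by rw [mul_div_assoc, hid]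

lemma aux_hasDeriv {x : ℝ} (hx : x ∈ Set.Ioo (1/2 : ℝ) 1) :
    HasDerivAt (fun y : ℝ => y / (1 - y)) (1 / (1 - x)^2) x := by
  have hne : 1 - x ≠ 0 := by have := hx.2; intro h; linarith [sub_eq_zero.mp h]
  have := (hasDerivAt_id x).div ((hasDerivAt_const x (1:ℝ)).sub (hasDerivAt_id x)) hne
  refine this.congr_deriv ?_
  simp only [Pi.sub_apply, id]; ring

lemma aux_inj : Set.InjOn (fun y : ℝ => y / (1 - y)) (Set.Ioo (1/2 : ℝ) 1) := by
  intro a ha b hb hab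
  have h1 : 1 - a ≠ 0 := by have := ha.2; intro h; linarith [sub_eq_zero.mp h]
  have h2 : 1 - b ≠ 0 := by have := hb.2; intro h; linarith [sub_eq_zero.mp h]
  field_simp at hab
  linarith

lemma aux_image : (fun y : ℝ => y / (1 - y)) '' (Set.Ioo (1/2 : ℝ) 1) = Set.Ioi (1:ℝ) := by
  ext y
  constructor
  · rintro ⟨x, hx, rfl⟩
    have h1x : 0 < 1 - x := by linarith [hx.2]
    have : 1 - x < x := by linarith [hx.1]
    simpa [Set.mem_Ioi] using (one_lt_div h1x).mpr this
  · intro hy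
    have hy1 : (1:ℝ) < y := hy
    have hy0 : (0:ℝ) < 1 + y := by linarith
    refine ⟨y / (1 + y), ⟨?_, ?_⟩, ?_⟩
    · rw [lt_div_iff₀ hy0]; linarith
    · rw [div_lt_one hy0]; linarith
    · show y / (1 + y) / (1 - y / (1 + y)) = y
      have : 1 - y / (1 + y) = 1 / (1 + y) := by field_simp; ring
      rw [this]
      field_simp

lemma aux_pointwise (ν : ℝ) (h0 : 0 < ν) {x : ℝ} (hx : x ∈ Set.Ioo (1/2 : ℝ) 1) :
    |1 / (1 - x)^2| • (((x / (1 - x) + 1) ^ (2 * ν) - (x / (1 - x)) ^ (2 * ν)) /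
        (x / (1 - x)) ^ (ν + 1)) =
      (1 - x ^ (2 * ν)) / (x ^ (ν + 1) * (1 - x) ^ (ν + 1)) := by
  have hx0 : (0:ℝ) < x := by have := hx.1; linarith
  have h1x : (0:ℝ) < 1 - x := by have := hx.2; linarith
  have hv1 : x / (1 - x) + 1 = 1 / (1 - x) := by field_simp; ring
  rw [smul_eq_mul, hv1, Real.div_rpow hx0.le h1x.le, Real.div_rpow hx0.le h1x.le,
    Real.div_rpow zero_le_one h1x.le, Real.one_rpow,
    abs_of_pos (by positivity : (0:ℝ) < 1 / (1 - x)^2)]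
  have hA : (0:ℝ) < x ^ (2*ν) := Real.rpow_pos_of_pos hx0 _
  have hB : (0:ℝ) < (1-x) ^ (2*ν) := Real.rpow_pos_of_pos h1x _
  have hC : (0:ℝ) < x ^ (ν+1) := Real.rpow_pos_of_pos hx0 _
  have hD : (0:ℝ) < (1-x) ^ (ν+1) := Real.rpow_pos_of_pos h1x _
  have hE : (0:ℝ) < (1-x)^2 := by positivity
  have key : (1-x) ^ (2*ν) * (1-x)^2 = ((1-x) ^ (ν+1))^2 := by
    rw [← Real.rpow_natCast ((1-x) ^ (ν+1)) 2, ← Real.rpow_mul h1x.le,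
      ← Real.rpow_natCast (1-x) 2, ← Real.rpow_add h1x]
    norm_num
    ring_nf
  field_simp
  linear_combination (-(1 - x^(2*ν))) * key

theorem stmt_6 (ν : ℝ) (h0 : 0 < ν) (h1 : ν < 1) :
    IntegrableOn (fun v : ℝ => ((v + 1) ^ (2 * ν) - v ^ (2 * ν)) / v ^ (ν + 1))
        (Set.Ici 1) ∧
    IntegrableOn (fun x : ℝ => (1 - x ^ (2 * ν)) / (x ^ (ν + 1) * (1 - x) ^ (ν + 1)))
        (Set.Ioo (1 / 2) 1) ∧
    (∫ v in Set.Ici (1 : ℝ), ((v + 1) ^ (2 * ν) - v ^ (2 * ν)) / v ^ (ν + 1)) =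
      ∫ x in Set.Ioo (1 / 2 : ℝ) 1, (1 - x ^ (2 * ν)) / (x ^ (ν + 1) * (1 - x) ^ (ν + 1)) := by
  set g : ℝ → ℝ := fun v => ((v + 1) ^ (2 * ν) - v ^ (2 * ν)) / v ^ (ν + 1) with hg
  have hIci : IntegrableOn g (Set.Ici 1) := aux_intV ν h0 h1
  have hf' : ∀ x ∈ Set.Ioo (1/2 : ℝ) 1,
      HasDerivWithinAt (fun y : ℝ => y / (1 - y)) (1 / (1 - x)^2) (Set.Ioo (1/2 : ℝ) 1) x :=
    fun x hx => (aux_hasDeriv hx).hasDerivWithinAt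
  have hiff := integrableOn_image_iff_integrableOn_abs_deriv_smul
    measurableSet_Ioo hf' aux_inj g
  rw [aux_image] at hiff
  have hIoi : IntegrableOn g (Set.Ioi 1) := hIci.mono_set Set.Ioi_subset_Ici_self
  have hInt2 : IntegrableOn
      (fun x : ℝ => (1 - x ^ (2 * ν)) / (x ^ (ν + 1) * (1 - x) ^ (ν + 1)))
      (Set.Ioo (1/2 : ℝ) 1) := by
    refine (hiff.mp hIoi).congr_fun (fun x hx => ?_) measurableSet_Ioo
    exact aux_pointwise ν h0 hx
  refine ⟨hIci, hInt2, ?_⟩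
  have h1' : (∫ v in Set.Ici (1 : ℝ), g v) = ∫ v in Set.Ioi (1 : ℝ), g v :=
    integral_Ici_eq_integral_Ioi
  have h2' := integral_image_eq_integral_abs_deriv_smul measurableSet_Ioo hf' aux_inj g
  rw [aux_image] at h2'
  rw [hg] at h1' h2'
  simp only at h1' h2' ⊢
  rw [h1', h2']
  exact setIntegral_congr_fun measurableSet_Ioo (fun x hx => aux_pointwise ν h0 hx)
end

section
/- The function ν ↦ κ_ν is strictly increasing on (0,1): if 0 < ν₁ < ν₂ < 1 then κ_{ν₁} < κ_{ν₂}. -/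
open MeasureTheory

/-- `κ_ν = ∫_1^∞ ((v+1)^{2ν} − v^{2ν})/v^{ν+1} dv`. -/
noncomputable def kappa (ν : ℝ) : ℝ :=
  ∫ v in Set.Ici (1 : ℝ), ((v + 1) ^ (2 * ν) - v ^ (2 * ν)) / v ^ (ν + 1)

/-- Rewrite the integrand in the form `(a^ν - v^ν)/v` with `a = (v+1)^2/v`. -/
lemma kappa_integrand_eq {v : ℝ} (hv : 1 ≤ v) (ν : ℝ) :
    ((v + 1) ^ (2 * ν) - v ^ (2 * ν)) / v ^ (ν + 1)
      = ((((v + 1) ^ 2 / v)) ^ ν - v ^ ν) / v := by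
  have hv0 : (0 : ℝ) < v := lt_of_lt_of_le one_pos hv
  have h1 : ((v + 1) ^ 2 / v) ^ ν = (v + 1) ^ (2 * ν) / v ^ ν := by
    rw [Real.div_rpow (by positivity) hv0.le, ← Real.rpow_natCast_mul (by positivity)]
    norm_num
  have h2 : v ^ (ν + 1) = v ^ ν * v := by
    rw [Real.rpow_add hv0, Real.rpow_one]
  have h3 : v ^ (2 * ν) = v ^ ν * v ^ ν := by
    rw [← Real.rpow_add hv0]; ring_nf
  have hvν : (0 : ℝ) < v ^ ν := Real.rpow_pos_of_pos hv0 ν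
  rw [h1, h2, h3]
  field_simp

/-- Pointwise strict monotonicity of the integrand in `ν`. -/
lemma integrand_strictMono {v : ℝ} (hv : 1 ≤ v) {ν₁ ν₂ : ℝ} (h0 : 0 < ν₁) (h12 : ν₁ < ν₂) :
    ((v + 1) ^ (2 * ν₁) - v ^ (2 * ν₁)) / v ^ (ν₁ + 1)
      < ((v + 1) ^ (2 * ν₂) - v ^ (2 * ν₂)) / v ^ (ν₂ + 1) := by
  have hv0 : (0 : ℝ) < v := lt_of_lt_of_le one_pos hv
  rw [kappa_integrand_eq hv ν₁, kappa_integrand_eq hv ν₂]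
  set a : ℝ := (v + 1) ^ 2 / v with ha
  have hba : v < a := by
    rw [ha, lt_div_iff₀ hv0]
    nlinarith
  have ha1 : (1 : ℝ) < a := lt_of_le_of_lt hv hba
  set δ : ℝ := ν₂ - ν₁ with hδ
  have hδ0 : 0 < δ := by simp [hδ]; linarith
  have key : v ^ ν₁ * (v ^ δ - 1) < a ^ ν₁ * (a ^ δ - 1) := by
    apply mul_lt_mul''
    · exact Real.rpow_lt_rpow hv0.le hba h0
    · have := Real.rpow_lt_rpow hv0.le hba hδ0
      linarith
    · positivity
    · have : (1:ℝ) ≤ v ^ δ := Real.one_le_rpow hv hδ0.le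
      linarith
  have e1 : a ^ ν₂ = a ^ ν₁ * a ^ δ := by
    rw [← Real.rpow_add (by linarith : (0:ℝ) < a), hδ]; ring_nf
  have e2 : v ^ ν₂ = v ^ ν₁ * v ^ δ := by
    rw [← Real.rpow_add hv0, hδ]; ring_nf
  have : a ^ ν₁ - v ^ ν₁ < a ^ ν₂ - v ^ ν₂ := by
    rw [e1, e2]; nlinarith
  exact (div_lt_div_iff_of_pos_right hv0).mpr this

lemma integrand_nonneg {v : ℝ} (hv : 1 ≤ v) {ν : ℝ} (hν : 0 ≤ ν) :
    0 ≤ ((v + 1) ^ (2 * ν) - v ^ (2 * ν)) / v ^ (ν + 1) := by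
  have hv0 : (0 : ℝ) < v := lt_of_lt_of_le one_pos hv
  apply div_nonneg _ (Real.rpow_pos_of_pos hv0 _).le
  have := Real.rpow_le_rpow hv0.le (by linarith : v ≤ v + 1) (by positivity : (0:ℝ) ≤ 2 * ν)
  linarith

/-- Numerator bound from Bernoulli's inequality. -/
lemma integrand_le {v : ℝ} (hv : 1 ≤ v) {ν : ℝ} (h0 : 0 < ν) (h1 : ν < 1) :
    ((v + 1) ^ (2 * ν) - v ^ (2 * ν)) / v ^ (ν + 1) ≤ 3 * v ^ (ν - 2) := by
  have hv0 : (0 : ℝ) < v := lt_of_lt_of_le one_pos hv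
  have hs0 : (0 : ℝ) ≤ (2 * v + 1) / v ^ 2 := by positivity
  have hber := rpow_one_add_le_one_add_mul_self (s := (2 * v + 1) / v ^ 2)
    (by linarith) h0.le h1.le
  have h1s : (1 : ℝ) + (2 * v + 1) / v ^ 2 = (v + 1) ^ 2 / v ^ 2 := by
    field_simp; ring
  rw [h1s] at hber
  have hA : (v + 1) ^ (2 * ν) = ((v + 1) ^ 2 / v ^ 2) ^ ν * v ^ (2 * ν) := by
    rw [Real.div_rpow (by positivity) (by positivity),
      ← Real.rpow_natCast_mul (by positivity : (0:ℝ) ≤ v + 1),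
      ← Real.rpow_natCast_mul hv0.le]
    push_cast
    rw [div_mul_cancel₀]
    positivity
  have hnum : (v + 1) ^ (2 * ν) - v ^ (2 * ν) ≤ 3 * v ^ (2 * ν - 1) := by
    have hmul : ((v + 1) ^ 2 / v ^ 2) ^ ν * v ^ (2 * ν)
        ≤ (1 + ν * ((2 * v + 1) / v ^ 2)) * v ^ (2 * ν) :=
      mul_le_mul_of_nonneg_right hber (Real.rpow_pos_of_pos hv0 _).le
    rw [← hA] at hmul
    have hsle : ν * ((2 * v + 1) / v ^ 2) ≤ 3 / v := by
      rw [mul_div_assoc', div_le_div_iff₀ (by positivity) hv0]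
      nlinarith
    have h2 : (1 + ν * ((2 * v + 1) / v ^ 2)) * v ^ (2 * ν)
        ≤ (1 + 3 / v) * v ^ (2 * ν) := by
      apply mul_le_mul_of_nonneg_right _ (Real.rpow_pos_of_pos hv0 _).le
      linarith
    have h3 : (1 + 3 / v) * v ^ (2 * ν) = v ^ (2 * ν) + 3 * v ^ (2 * ν - 1) := by
      rw [Real.rpow_sub hv0, Real.rpow_one]
      field_simp
    nlinarith [hmul, h2, h3]
  have hden : v ^ (2 * ν - 1) / v ^ (ν + 1) = v ^ (ν - 2) := by
    rw [← Real.rpow_sub hv0]; ring_nf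
  calc ((v + 1) ^ (2 * ν) - v ^ (2 * ν)) / v ^ (ν + 1)
      ≤ 3 * v ^ (2 * ν - 1) / v ^ (ν + 1) :=
        by gcongr
    _ = 3 * v ^ (ν - 2) := by rw [mul_div_assoc, hden]

lemma integrable_integrand {ν : ℝ} (h0 : 0 < ν) (h1 : ν < 1) :
    IntegrableOn (fun v : ℝ => ((v + 1) ^ (2 * ν) - v ^ (2 * ν)) / v ^ (ν + 1))
      (Set.Ici 1) := by
  have hmaj : IntegrableOn (fun v : ℝ => 3 * v ^ (ν - 2)) (Set.Ici 1) := by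
    rw [integrableOn_Ici_iff_integrableOn_Ioi]
    exact (integrableOn_Ioi_rpow_of_lt (by linarith) one_pos).const_mul 3
  apply Integrable.mono' hmaj
  · apply Measurable.aestronglyMeasurable
    fun_prop
  · filter_upwards [ae_restrict_mem measurableSet_Ici] with v hv
    rw [Real.norm_eq_abs, abs_of_nonneg (integrand_nonneg hv h0.le)]
    exact integrand_le hv h0 h1

theorem stmt_7 (ν₁ ν₂ : ℝ) (h0 : 0 < ν₁) (h12 : ν₁ < ν₂) (h1 : ν₂ < 1) :
    kappa ν₁ < kappa ν₂ := by
  have hi1 := integrable_integrand h0 (h12.trans h1)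
  have hi2 := integrable_integrand (h0.trans h12) h1
  set f₁ : ℝ → ℝ := fun v => ((v + 1) ^ (2 * ν₁) - v ^ (2 * ν₁)) / v ^ (ν₁ + 1)
  set f₂ : ℝ → ℝ := fun v => ((v + 1) ^ (2 * ν₂) - v ^ (2 * ν₂)) / v ^ (ν₂ + 1)
  have hpos : 0 < ∫ v in Set.Ici (1:ℝ), (f₂ v - f₁ v) := by
    rw [setIntegral_pos_iff_support_of_nonneg_ae]
    · apply lt_of_lt_of_le _ (measure_mono (s := Set.Ici (1:ℝ)) ?_)
      · rw [Real.volume_Ici]; simp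
      · intro v hv
        refine ⟨?_, hv⟩
        simp only [Function.mem_support, f₁, f₂]
        have := integrand_strictMono hv h0 h12
        intro h; rw [sub_eq_zero] at h
        linarith
    · filter_upwards [ae_restrict_mem measurableSet_Ici] with v hv
      have := integrand_strictMono hv h0 h12
      simp only [Pi.zero_apply]
      linarith
    · exact hi2.sub hi1
  rw [integral_sub hi2 hi1] at hpos
  unfold kappa
  linarith
end

section
/- One has κ_{1/2} = 2 (so that 1 − (1/2)·κ_{1/2} = 0); moreover 1 − ν·κ_ν > 0 for every ν with 0 < ν < 1/2, and 1 − ν·κ_ν < 0 for every ν with 1/2 < ν < 1. -/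
open MeasureTheory

namespace KappaAux

open Real Set

lemma split {ν v : ℝ} (hv : 1 ≤ v) :
    (v + 1) ^ (2 * ν) = v ^ (2 * ν) * (1 + 1 / v) ^ (2 * ν) := by
  have hv0 : (0:ℝ) < v := lt_of_lt_of_le one_pos hv
  rw [← Real.mul_rpow (le_of_lt hv0) (by positivity)]
  congr 1
  field_simp

lemma pow_cancel {ν v : ℝ} (hv : 1 ≤ v) (c : ℝ) :
    c * v ^ (ν - 2) * v ^ (ν + 1) = c * v ^ (2 * ν - 1) := by
  have hv0 : (0:ℝ) < v := lt_of_lt_of_le one_pos hv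
  rw [mul_assoc, ← Real.rpow_add hv0]
  ring_nf

lemma lower_bd {ν v : ℝ} (hν : 1 / 2 ≤ ν) (hv : 1 ≤ v) :
    2 * ν * v ^ (ν - 2) ≤ ((v + 1) ^ (2 * ν) - v ^ (2 * ν)) / v ^ (ν + 1) := by
  have hv0 : (0:ℝ) < v := lt_of_lt_of_le one_pos hv
  rw [le_div_iff₀ (by positivity), pow_cancel hv]
  have hsle : (-1:ℝ) ≤ 1 / v := by
    have := one_div_pos.mpr hv0; linarith
  have hb := one_add_mul_self_le_rpow_one_add (s := 1 / v) hsle (p := 2 * ν) (by linarith)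
  rw [split hv]
  have h1 : v ^ (2 * ν) * (1 + 2 * ν * (1 / v)) ≤ v ^ (2 * ν) * (1 + 1 / v) ^ (2 * ν) :=
    mul_le_mul_of_nonneg_left hb (Real.rpow_nonneg hv0.le _)
  have h2 : v ^ (2 * ν) * (2 * ν * (1 / v)) = 2 * ν * v ^ (2 * ν - 1) := by
    rw [Real.rpow_sub hv0, Real.rpow_one]
    field_simp
  nlinarith [h1, h2]

lemma upper_bd_small {ν v : ℝ} (hν0 : 0 ≤ ν) (hν : ν ≤ 1 / 2) (hv : 1 ≤ v) :
    ((v + 1) ^ (2 * ν) - v ^ (2 * ν)) / v ^ (ν + 1) ≤ 2 * ν * v ^ (ν - 2) := by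
  have hv0 : (0:ℝ) < v := lt_of_lt_of_le one_pos hv
  rw [div_le_iff₀ (by positivity), pow_cancel hv]
  have hsle : (-1:ℝ) ≤ 1 / v := by
    have := one_div_pos.mpr hv0; linarith
  have hb := rpow_one_add_le_one_add_mul_self (s := 1 / v) hsle (p := 2 * ν) (by linarith)
    (by linarith)
  rw [split hv]
  have h1 : v ^ (2 * ν) * (1 + 1 / v) ^ (2 * ν) ≤ v ^ (2 * ν) * (1 + 2 * ν * (1 / v)) :=
    mul_le_mul_of_nonneg_left hb (Real.rpow_nonneg hv0.le _)
  have h2 : v ^ (2 * ν) * (2 * ν * (1 / v)) = 2 * ν * v ^ (2 * ν - 1) := by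
    rw [Real.rpow_sub hv0, Real.rpow_one]
    field_simp
  nlinarith [h1, h2]

lemma nonneg_integrand {ν v : ℝ} (hν0 : 0 ≤ ν) (hv : 1 ≤ v) :
    0 ≤ ((v + 1) ^ (2 * ν) - v ^ (2 * ν)) / v ^ (ν + 1) := by
  have hv0 : (0:ℝ) < v := lt_of_lt_of_le one_pos hv
  apply div_nonneg _ (by positivity)
  have : v ^ (2 * ν) ≤ (v + 1) ^ (2 * ν) :=
    Real.rpow_le_rpow hv0.le (by linarith) (by positivity)
  linarith

lemma upper_bd_big {ν v : ℝ} (hν : 1 / 2 ≤ ν) (hν1 : ν ≤ 1) (hv : 1 ≤ v) :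
    ((v + 1) ^ (2 * ν) - v ^ (2 * ν)) / v ^ (ν + 1) ≤ 4 * ν * v ^ (ν - 2) := by
  have hv0 : (0:ℝ) < v := lt_of_lt_of_le one_pos hv
  have hv10 : (0:ℝ) < v + 1 := by linarith
  rw [div_le_iff₀ (by positivity), pow_cancel hv]
  -- (v+1)^(2ν) - v^(2ν) ≤ 2ν(v+1)^(2ν-1)
  have hb := one_add_mul_self_le_rpow_one_add
    (s := -(1 / (v + 1))) (by rw [neg_le_neg_iff]; rw [div_le_one hv10]; linarith)
    (p := 2 * ν) (by linarith)
  have hsplit : v ^ (2 * ν) = (v + 1) ^ (2 * ν) * (1 + -(1 / (v + 1))) ^ (2 * ν) := by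
    rw [← Real.mul_rpow hv10.le (by rw [← sub_eq_add_neg, sub_nonneg, div_le_one hv10]; linarith)]
    congr 1
    field_simp
    ring
  have h1 : (v + 1) ^ (2 * ν) * (1 + 2 * ν * -(1 / (v + 1)))
      ≤ (v + 1) ^ (2 * ν) * (1 + -(1 / (v + 1))) ^ (2 * ν) :=
    mul_le_mul_of_nonneg_left hb (Real.rpow_nonneg hv10.le _)
  have h2 : (v + 1) ^ (2 * ν) * (2 * ν * (1 / (v + 1))) = 2 * ν * (v + 1) ^ (2 * ν - 1) := by
    rw [Real.rpow_sub hv10, Real.rpow_one]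
    ring
  have key : (v + 1) ^ (2 * ν) - v ^ (2 * ν) ≤ 2 * ν * (v + 1) ^ (2 * ν - 1) := by
    rw [hsplit]; nlinarith [h1, h2]
  -- (v+1)^(2ν-1) ≤ 2 v^(2ν-1)
  have hmono : (v + 1) ^ (2 * ν - 1) ≤ (2 * v) ^ (2 * ν - 1) :=
    Real.rpow_le_rpow hv10.le (by linarith) (by linarith)
  have h3 : (2 * v) ^ (2 * ν - 1) = 2 ^ (2 * ν - 1) * v ^ (2 * ν - 1) :=
    Real.mul_rpow (by norm_num) hv0.le
  have h4 : (2:ℝ) ^ (2 * ν - 1) ≤ 2 ^ (1:ℝ) :=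
    Real.rpow_le_rpow_of_exponent_le one_le_two (by linarith)
  have h5 : (2:ℝ) ^ (1:ℝ) = 2 := Real.rpow_one 2
  have hvp : (0:ℝ) ≤ v ^ (2 * ν - 1) := Real.rpow_nonneg hv0.le _
  have hA : 2 * ν * (v + 1) ^ (2 * ν - 1) ≤ 2 * ν * ((2:ℝ) ^ (2 * ν - 1) * v ^ (2 * ν - 1)) := by
    rw [← h3]; exact mul_le_mul_of_nonneg_left hmono (by linarith)
  have hB : (2:ℝ) ^ (2 * ν - 1) * v ^ (2 * ν - 1) ≤ 2 * v ^ (2 * ν - 1) := by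
    nlinarith [h4, h5, hvp]
  have hC : 2 * ν * ((2:ℝ) ^ (2 * ν - 1) * v ^ (2 * ν - 1)) ≤ 2 * ν * (2 * v ^ (2 * ν - 1)) :=
    mul_le_mul_of_nonneg_left hB (by linarith)
  nlinarith [key, hA, hC]

lemma integrable_bound {ν : ℝ} (hν1 : ν < 1) (c : ℝ) :
    IntegrableOn (fun v : ℝ => c * v ^ (ν - 2)) (Ici 1) := by
  rw [integrableOn_Ici_iff_integrableOn_Ioi]
  exact (integrableOn_Ioi_rpow_of_lt (by linarith) one_pos).const_mul c

lemma integral_bound {ν : ℝ} (hν1 : ν < 1) (c : ℝ) :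
    ∫ v in Ici (1:ℝ), c * v ^ (ν - 2) = c / (1 - ν) := by
  rw [MeasureTheory.integral_Ici_eq_integral_Ioi, MeasureTheory.integral_const_mul,
    integral_Ioi_rpow_of_lt (by linarith) one_pos]
  rw [Real.one_rpow]
  have h1 : ν - 2 + 1 ≠ 0 := by intro h; linarith
  have h2 : (1:ℝ) - ν ≠ 0 := by intro h; linarith
  field_simp
  ring

lemma meas (ν : ℝ) :
    AEStronglyMeasurable (fun v : ℝ => ((v + 1) ^ (2 * ν) - v ^ (2 * ν)) / v ^ (ν + 1))
      (volume.restrict (Ici 1)) := by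
  apply Measurable.aestronglyMeasurable
  fun_prop

end KappaAux

open Real Set KappaAux

theorem stmt_8 :
    kappa (1 / 2) = 2 ∧
    (∀ ν : ℝ, 0 < ν → ν < 1 / 2 → 0 < 1 - ν * kappa ν) ∧
    (∀ ν : ℝ, 1 / 2 < ν → ν < 1 → 1 - ν * kappa ν < 0) := by
  refine ⟨?_, ?_, ?_⟩
  · -- kappa (1/2) = 2
    have : kappa (1 / 2) = ∫ v in Ici (1:ℝ), 1 * v ^ ((1:ℝ)/2 - 2) := by
      unfold kappa
      apply setIntegral_congr_fun measurableSet_Ici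
      intro v hv
      simp only [mem_Ici] at hv
      simp only []
      have hv0 : (0:ℝ) < v := lt_of_lt_of_le one_pos hv
      have h1 : 2 * ((1:ℝ)/2) = 1 := by norm_num
      rw [h1, Real.rpow_one, Real.rpow_one, one_mul]
      have : (1:ℝ)/2 - 2 = -((1:ℝ)/2 + 1) := by norm_num
      rw [this, Real.rpow_neg hv0.le]
      field_simp
      ring
    rw [this, integral_bound (by norm_num) 1]
    norm_num
  · intro ν hν0 hν
    have hle : kappa ν ≤ 2 * ν / (1 - ν) := by
      have := integral_bound (ν := ν) (by linarith) (2 * ν)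
      rw [← this]
      unfold kappa
      apply integral_mono_of_nonneg
      · filter_upwards [ae_restrict_mem measurableSet_Ici] with v hv
        exact nonneg_integrand hν0.le hv
      · exact integrable_bound (by linarith) _
      · filter_upwards [ae_restrict_mem measurableSet_Ici] with v hv
        exact upper_bd_small hν0.le hν.le hv
    have h10 : (0:ℝ) < 1 - ν := by linarith
    have : ν * kappa ν ≤ ν * (2 * ν / (1 - ν)) :=
      mul_le_mul_of_nonneg_left hle hν0.le
    have h2 : ν * (2 * ν) / (1 - ν) < 1 := by
      rw [div_lt_one h10]; nlinarith
    rw [mul_div_assoc] at h2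
    linarith
  · intro ν hν hν1
    have hint : IntegrableOn
        (fun v : ℝ => ((v + 1) ^ (2 * ν) - v ^ (2 * ν)) / v ^ (ν + 1)) (Ici 1) := by
      apply Integrable.mono' (integrable_bound (ν := ν) hν1 (4 * ν)) (meas ν)
      filter_upwards [ae_restrict_mem measurableSet_Ici] with v hv
      rw [Real.norm_eq_abs, abs_of_nonneg (nonneg_integrand (by linarith) hv)]
      exact upper_bd_big hν.le hν1.le hv
    have hle : 2 * ν / (1 - ν) ≤ kappa ν := by
      have := integral_bound (ν := ν) hν1 (2 * ν)
      rw [← this]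
      unfold kappa
      apply integral_mono_of_nonneg
      · filter_upwards [ae_restrict_mem measurableSet_Ici] with v hv
        have hv1 : (1:ℝ) ≤ v := hv
        exact mul_nonneg (by linarith) (Real.rpow_nonneg (by linarith) _)
      · exact hint
      · filter_upwards [ae_restrict_mem measurableSet_Ici] with v hv
        exact lower_bd hν.le hv
    have h10 : (0:ℝ) < 1 - ν := by linarith
    have : ν * (2 * ν / (1 - ν)) ≤ ν * kappa ν :=
      mul_le_mul_of_nonneg_left hle (by linarith)
    have h2 : 1 < ν * (2 * ν) / (1 - ν) := by
      rw [lt_div_iff₀ h10]; nlinarith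
    rw [mul_div_assoc] at h2
    linarith
end

section
/- Let ν > 0 and fix λ > 0. Then, as t → ∞, K_1(t;λ) = (t+λ)^{-2ν} ∫_1^{t/λ} ((v+1)^{2ν} − v^{2ν}) / v^{ν+1} dv + O(t^{-ν-1}); that is, there exist constants C > 0 and T > λ such that for all t ≥ T, |K_1(t;λ) − (t+λ)^{-2ν} ∫_1^{t/λ} ((v+1)^{2ν} − v^{2ν}) v^{-(ν+1)} dv| ≤ C t^{-ν-1}. -/
open intervalIntegral Set

/-- `K₁(t;λ) = ∫_λ^t u^{-(ν+1)} ((t+λ−u)^{-ν} − t^{-ν}) du`. -/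
noncomputable def K₁ (ν t lam : ℝ) : ℝ :=
  ∫ u in lam..t, u ^ (-(ν + 1)) * ((t + lam - u) ^ (-ν) - t ^ (-ν))

private lemma contOn_aux {a b s : ℝ} (p q : ℝ) (ha : 0 < a) (hab : a ≤ b) (hb : b < s) :
    ContinuousOn (fun u : ℝ => u ^ p * (s - u) ^ q) (Set.uIcc a b) := by
  rw [Set.uIcc_of_le hab]
  have h1 : ContinuousOn (fun u : ℝ => u ^ p) (Set.Icc a b) :=
    ContinuousOn.rpow_const continuousOn_id
      (fun x hx => Or.inl (ne_of_gt (lt_of_lt_of_le ha hx.1)))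
  have h2 : ContinuousOn (fun u : ℝ => (s - u) ^ q) (Set.Icc a b) :=
    ContinuousOn.rpow_const (continuousOn_const.sub continuousOn_id)
      (fun x hx => Or.inl (ne_of_gt (sub_pos.mpr (lt_of_le_of_lt hx.2 hb))))
  exact h1.mul h2

set_option maxHeartbeats 1600000 in
theorem stmt_17 (ν lam : ℝ) (hν : 0 < ν) (hlam : 0 < lam) :
    ∃ C > 0, ∃ T > lam, ∀ t ≥ T,
      |K₁ ν t lam -
        (t + lam) ^ (-(2 * ν)) *
          ∫ v in (1 : ℝ)..(t / lam), ((v + 1) ^ (2 * ν) - v ^ (2 * ν)) / v ^ (ν + 1)| ≤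
      C * t ^ (-(ν + 1)) := by
  have hC : (0:ℝ) < 2 * lam * lam ^ (-ν) + 1 := by positivity
  refine ⟨2 * lam * lam ^ (-ν) + 1, hC, lam + 1, by linarith, fun t ht => ?_⟩
  have hlt : lam < t := by linarith
  have ht0 : 0 < t := hlam.trans hlt
  set s := t + lam with hs
  have hs0 : 0 < s := by positivity
  have hst : t < s := by rw [hs]; linarith
  have hh1 : lam < s / 2 := by rw [hs]; linarith
  have hh2 : s / 2 < t := by rw [hs]; linarith
  have hh0 : 0 < s / 2 := by linarith
  clear_value s

  -- basic integrability
  have int1 : IntervalIntegrable (fun u : ℝ => u ^ (-(ν+1)) * (s - u) ^ (-ν)) MeasureTheory.volume lam t :=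
    (contOn_aux _ _ hlam hlt.le hst).intervalIntegrable
  have int2 : IntervalIntegrable (fun u : ℝ => u ^ (-(ν+1))) MeasureTheory.volume lam t := by
    apply ContinuousOn.intervalIntegrable
    apply ContinuousOn.rpow_const continuousOn_id
    intro x hx
    rw [Set.uIcc_of_le hlt.le] at hx
    exact Or.inl (ne_of_gt (lt_of_lt_of_le hlam hx.1))
  have ftc1 : (∫ u in lam..t, u ^ (-(ν+1))) = (lam ^ (-ν) - t ^ (-ν)) / ν := by
    have hd : ∀ u ∈ Set.uIcc lam t,
        HasDerivAt (fun x : ℝ => -(x ^ (-ν)) / ν) (u ^ (-(ν+1))) u := by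
      intro u hu
      rw [Set.uIcc_of_le hlt.le] at hu
      have hu0 : u ≠ 0 := ne_of_gt (lt_of_lt_of_le hlam hu.1)
      have h := (Real.hasDerivAt_rpow_const (x := u) (p := -ν) (Or.inl hu0)).neg.div_const ν
      refine h.congr_deriv ?_
      rw [show -(ν+1) = -ν - 1 by ring]
      field_simp
    rw [intervalIntegral.integral_eq_sub_of_hasDerivAt hd int2]
    field_simp
    ring
  -- Step 1 : split K₁
  have step1 : K₁ ν t lam =
      (∫ u in lam..t, u ^ (-(ν+1)) * (s - u) ^ (-ν))
        - t ^ (-ν) * ((lam ^ (-ν) - t ^ (-ν)) / ν) := by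
    have h1 : K₁ ν t lam = ∫ u in lam..t,
        (u ^ (-(ν+1)) * (s - u) ^ (-ν) - u ^ (-(ν+1)) * t ^ (-ν)) := by
      rw [K₁, ← hs]
      apply intervalIntegral.integral_congr
      intro u _
      simp only
      ring
    rw [h1, intervalIntegral.integral_sub int1 (int2.mul_const _),
      intervalIntegral.integral_mul_const, ftc1]
    ring

  have i1 : IntervalIntegrable (fun u : ℝ => u ^ (-(ν+1)) * (s - u) ^ (-ν))
      MeasureTheory.volume lam (s/2) :=
    (contOn_aux _ _ hlam hh1.le (by linarith)).intervalIntegrable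
  have i2 : IntervalIntegrable (fun u : ℝ => u ^ (-(ν+1)) * (s - u) ^ (-ν))
      MeasureTheory.volume (s/2) t :=
    (contOn_aux _ _ hh0 hh2.le hst).intervalIntegrable
  have i3 : IntervalIntegrable (fun u : ℝ => u ^ (-ν) * (s - u) ^ (-(ν+1)))
      MeasureTheory.volume (s/2) t :=
    (contOn_aux _ _ hh0 hh2.le hst).intervalIntegrable
  -- Step 2+3 : I = ∫_{s/2}^t s u^{-(ν+1)} (s-u)^{-(ν+1)}
  have step3 : (∫ u in lam..t, u ^ (-(ν+1)) * (s - u) ^ (-ν))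
      = ∫ u in (s/2)..t, s * (u ^ (-(ν+1)) * (s - u) ^ (-(ν+1))) := by
    have hsplit : (∫ u in lam..t, u ^ (-(ν+1)) * (s - u) ^ (-ν))
        = (∫ u in lam..(s/2), u ^ (-(ν+1)) * (s - u) ^ (-ν))
          + ∫ u in (s/2)..t, u ^ (-(ν+1)) * (s - u) ^ (-ν) :=
      (intervalIntegral.integral_add_adjacent_intervals i1 i2).symm
    have hrefl : (∫ u in lam..(s/2), u ^ (-(ν+1)) * (s - u) ^ (-ν))
        = ∫ u in (s/2)..t, u ^ (-ν) * (s - u) ^ (-(ν+1)) := by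
      have h := intervalIntegral.integral_comp_sub_left (a := lam) (b := s/2)
          (fun x : ℝ => x ^ (-ν) * (s - x) ^ (-(ν+1))) s
      have e1 : s - s/2 = s/2 := by ring
      have e2 : s - lam = t := by rw [hs]; ring
      rw [e1, e2] at h
      rw [← h]
      apply intervalIntegral.integral_congr
      intro u _
      simp only
      rw [show s - (s - u) = u by ring]
      ring
    rw [hsplit, hrefl, ← intervalIntegral.integral_add i3 i2]
    apply intervalIntegral.integral_congr
    intro u hu
    rw [Set.uIcc_of_le hh2.le] at hu
    have hu0 : (0:ℝ) < u := lt_of_lt_of_le hh0 hu.1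
    have hsu : (0:ℝ) < s - u := sub_pos.mpr (lt_of_le_of_lt hu.2 hst)
    simp only [Pi.add_apply]
    rw [show (-ν) = -(ν+1)+1 by ring, Real.rpow_add_one hu0.ne', Real.rpow_add_one hsu.ne']
    ring

  -- Step 4 : substitution v = u/(s-u) in the v-integral
  have step4 : (∫ v in (1:ℝ)..(t/lam), ((v + 1) ^ (2 * ν) - v ^ (2 * ν)) / v ^ (ν + 1))
      = ∫ u in (s/2)..t,
          (s ^ (2*ν) - u ^ (2*ν)) * (s * (u ^ (-(ν+1)) * (s - u) ^ (-(ν+1)))) := by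
    have hd : ∀ x ∈ Set.uIcc (s/2) t,
        HasDerivAt (fun u : ℝ => u / (s - u)) (s / (s - x)^2) x := by
      intro x hx
      rw [Set.uIcc_of_le hh2.le] at hx
      have hsx : (0:ℝ) < s - x := sub_pos.mpr (lt_of_le_of_lt hx.2 hst)
      have h := (hasDerivAt_id x).div ((hasDerivAt_id x).const_sub s) hsx.ne'
      refine h.congr_deriv ?_
      simp only [id_eq]
      field_simp
      ring
    have hcont' : ContinuousOn (fun x : ℝ => s / (s - x)^2) (Set.uIcc (s/2) t) := by
      apply ContinuousOn.div continuousOn_const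
        ((continuousOn_const.sub continuousOn_id).pow 2)
      intro x hx
      rw [Set.uIcc_of_le hh2.le] at hx
      have hsx : (0:ℝ) < s - x := sub_pos.mpr (lt_of_le_of_lt hx.2 hst)
      exact pow_ne_zero _ hsx.ne'
    have hgc : ContinuousOn (fun v : ℝ => ((v + 1) ^ (2 * ν) - v ^ (2 * ν)) / v ^ (ν + 1))
        ((fun u : ℝ => u / (s - u)) '' Set.uIcc (s/2) t) := by
      have hsub : ((fun u : ℝ => u / (s - u)) '' Set.uIcc (s/2) t) ⊆ Set.Ioi 0 := by
        rintro y ⟨x, hx, rfl⟩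
        rw [Set.uIcc_of_le hh2.le] at hx
        have hx0 : (0:ℝ) < x := lt_of_lt_of_le hh0 hx.1
        have hsx : (0:ℝ) < s - x := sub_pos.mpr (lt_of_le_of_lt hx.2 hst)
        exact Set.mem_Ioi.mpr (div_pos hx0 hsx)
      refine ContinuousOn.mono ?_ hsub
      apply ContinuousOn.div
      · apply ContinuousOn.sub
        · apply ContinuousOn.rpow_const (continuousOn_id.add continuousOn_const)
          intro x hx
          have hx0 : (0:ℝ) < x := Set.mem_Ioi.mp hx
          exact Or.inl (by simp only [Pi.add_apply, id_eq]; positivity)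
        · apply ContinuousOn.rpow_const continuousOn_id
          intro x hx
          exact Or.inl (ne_of_gt (Set.mem_Ioi.mp hx))
      · apply ContinuousOn.rpow_const continuousOn_id
        intro x hx
        exact Or.inl (ne_of_gt (Set.mem_Ioi.mp hx))
      · intro x hx
        exact ne_of_gt (Real.rpow_pos_of_pos (Set.mem_Ioi.mp hx) _)
    have h := intervalIntegral.integral_comp_smul_deriv' hd hcont' hgc
    have e1 : (s/2) / (s - s/2) = 1 := by
      rw [show s - s/2 = s/2 by ring]
      field_simp
    have e2 : t / (s - t) = t / lam := by rw [show s - t = lam by rw [hs]; ring]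
    rw [e1, e2] at h
    rw [← h]
    apply intervalIntegral.integral_congr
    intro x hx
    rw [Set.uIcc_of_le hh2.le] at hx
    have hx0 : (0:ℝ) < x := lt_of_lt_of_le hh0 hx.1
    have hsx : (0:ℝ) < s - x := sub_pos.mpr (lt_of_le_of_lt hx.2 hst)
    simp only [Function.comp, smul_eq_mul]
    have e3 : x / (s - x) + 1 = s / (s - x) := by field_simp; ring
    rw [e3]
    have d1 : (s / (s-x)) ^ (2*ν) = s ^ (2*ν) * ((s-x) ^ (2*ν))⁻¹ := by
      rw [Real.div_rpow hs0.le hsx.le, div_eq_mul_inv]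
    have d2 : (x / (s-x)) ^ (2*ν) = x ^ (2*ν) * ((s-x) ^ (2*ν))⁻¹ := by
      rw [Real.div_rpow hx0.le hsx.le, div_eq_mul_inv]
    have d3 : (x / (s-x)) ^ (ν+1) = x ^ (ν+1) * ((s-x) ^ (ν+1))⁻¹ := by
      rw [Real.div_rpow hx0.le hsx.le, div_eq_mul_inv]
    rw [d1, d2, d3, Real.rpow_neg hx0.le, Real.rpow_neg hsx.le]
    have m : (s-x)^(ν+1) * (s-x)^(ν+1) = (s-x)^(2:ℕ) * (s-x)^(2*ν) := by
      rw [← Real.rpow_add hsx, ← Real.rpow_natCast (s-x) 2, ← Real.rpow_add hsx]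
      congr 1
      push_cast
      ring
    have n1 : ((s-x):ℝ)^(2:ℕ) ≠ 0 := pow_ne_zero _ hsx.ne'
    have n2 : (s-x) ^ (2*ν) ≠ 0 := (Real.rpow_pos_of_pos hsx _).ne'
    have n3 : (s-x) ^ (ν+1) ≠ 0 := (Real.rpow_pos_of_pos hsx _).ne'
    have n4 : x ^ (ν+1) ≠ 0 := (Real.rpow_pos_of_pos hx0 _).ne'
    field_simp
    linear_combination (s ^ (2*ν) - x ^ (2*ν)) * m

  -- FTC for the correction integral
  have cont5 : ContinuousOn (fun u : ℝ => s * (u ^ (-(ν+1)) * (s - u) ^ (-(ν+1))))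
      (Set.uIcc (s/2) t) := continuousOn_const.mul (contOn_aux _ _ hh0 hh2.le hst)
  have i5 : IntervalIntegrable (fun u : ℝ => s * (u ^ (-(ν+1)) * (s - u) ^ (-(ν+1))))
      MeasureTheory.volume (s/2) t := cont5.intervalIntegrable
  have i6 : IntervalIntegrable
      (fun u : ℝ => u ^ (2*ν) * (s * (u ^ (-(ν+1)) * (s - u) ^ (-(ν+1)))))
      MeasureTheory.volume (s/2) t := by
    apply ContinuousOn.intervalIntegrable
    apply ContinuousOn.mul ?_ cont5
    apply ContinuousOn.rpow_const continuousOn_id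
    intro x hx
    rw [Set.uIcc_of_le hh2.le] at hx
    exact Or.inl (ne_of_gt (lt_of_lt_of_le hh0 hx.1))
  have i7 : IntervalIntegrable (fun u : ℝ => s * (u ^ (ν-1) * (s - u) ^ (-(ν+1))))
      MeasureTheory.volume (s/2) t :=
    (continuousOn_const.mul (contOn_aux _ _ hh0 hh2.le hst)).intervalIntegrable
  have ftc2 : (∫ u in (s/2)..t, s * (u ^ (ν-1) * (s - u) ^ (-(ν+1))))
      = (t ^ ν * lam ^ (-ν) - 1) / ν := by
    have hd : ∀ u ∈ Set.uIcc (s/2) t,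
        HasDerivAt (fun x : ℝ => x ^ ν * (s - x) ^ (-ν) / ν)
          (s * (u ^ (ν-1) * (s - u) ^ (-(ν+1)))) u := by
      intro u hu
      rw [Set.uIcc_of_le hh2.le] at hu
      have hu0 : (0:ℝ) < u := lt_of_lt_of_le hh0 hu.1
      have hsu : (0:ℝ) < s - u := sub_pos.mpr (lt_of_le_of_lt hu.2 hst)
      have h1 : HasDerivAt (fun x : ℝ => x ^ ν) (ν * u ^ (ν-1)) u :=
        Real.hasDerivAt_rpow_const (Or.inl hu0.ne')
      have hin : HasDerivAt (fun x : ℝ => s - x) (-1) u := (hasDerivAt_id u).const_sub s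
      have h2 : HasDerivAt (fun x : ℝ => (s - x) ^ (-ν)) (ν * (s-u) ^ (-ν-1)) u := by
        have h3 := (Real.hasDerivAt_rpow_const (x := s - u) (p := -ν) (Or.inl hsu.ne')).comp u hin
        refine h3.congr_deriv ?_
        ring
      have h4 := (h1.mul h2).div_const ν
      refine h4.congr_deriv ?_
      have f1 : u ^ (ν - 1 + 1) = u ^ (ν-1) * u := Real.rpow_add_one hu0.ne' _
      rw [show ν - 1 + 1 = ν by ring] at f1
      have f2 : (s-u) ^ (-(ν+1) + 1) = (s-u) ^ (-(ν+1)) * (s-u) := Real.rpow_add_one hsu.ne' _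
      rw [show -(ν+1) + 1 = -ν by ring] at f2
      rw [show -ν - 1 = -(ν+1) by ring, f1, f2]
      field_simp
      ring
    rw [intervalIntegral.integral_eq_sub_of_hasDerivAt hd i7]
    have e1 : s - t = lam := by rw [hs]; ring
    have e2 : s - s/2 = s/2 := by ring
    have e3 : ((s/2):ℝ) ^ ν * (s/2) ^ (-ν) = 1 := by
      rw [← Real.rpow_add hh0]; norm_num
    rw [e1, e2, e3]
    ring
  -- Step 5 : split the substituted integral
  have step5 : (∫ u in (s/2)..t,
          (s ^ (2*ν) - u ^ (2*ν)) * (s * (u ^ (-(ν+1)) * (s - u) ^ (-(ν+1)))))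
      = s ^ (2*ν) * (∫ u in (s/2)..t, s * (u ^ (-(ν+1)) * (s - u) ^ (-(ν+1))))
        - (t ^ ν * lam ^ (-ν) - 1) / ν := by
    have h1 : (∫ u in (s/2)..t,
          (s ^ (2*ν) - u ^ (2*ν)) * (s * (u ^ (-(ν+1)) * (s - u) ^ (-(ν+1)))))
        = ∫ u in (s/2)..t,
            (s ^ (2*ν) * (s * (u ^ (-(ν+1)) * (s - u) ^ (-(ν+1))))
              - u ^ (2*ν) * (s * (u ^ (-(ν+1)) * (s - u) ^ (-(ν+1))))) := by
      apply intervalIntegral.integral_congr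
      intro u _
      simp only
      ring
    have h2 : (∫ u in (s/2)..t, u ^ (2*ν) * (s * (u ^ (-(ν+1)) * (s - u) ^ (-(ν+1)))))
        = ∫ u in (s/2)..t, s * (u ^ (ν-1) * (s - u) ^ (-(ν+1))) := by
      apply intervalIntegral.integral_congr
      intro u hu
      rw [Set.uIcc_of_le hh2.le] at hu
      have hu0 : (0:ℝ) < u := lt_of_lt_of_le hh0 hu.1
      simp only
      have f : u ^ (2*ν) * u ^ (-(ν+1)) = u ^ (ν-1) := by
        rw [← Real.rpow_add hu0]
        congr 1
        ring
      linear_combination s * (s - u) ^ (-(ν+1)) * f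
    rw [h1, intervalIntegral.integral_sub (i5.const_mul _) i6,
      intervalIntegral.integral_const_mul, h2, ftc2]
  -- Combine into the exact error term
  have hcancel : s ^ (-(2*ν)) * s ^ (2*ν) = 1 := by
    rw [← Real.rpow_add hs0]; norm_num
  have key : K₁ ν t lam -
      s ^ (-(2 * ν)) *
        (∫ v in (1 : ℝ)..(t / lam), ((v + 1) ^ (2 * ν) - v ^ (2 * ν)) / v ^ (ν + 1))
      = s ^ (-(2*ν)) * ((t ^ ν * lam ^ (-ν) - 1) / ν)
        - t ^ (-ν) * ((lam ^ (-ν) - t ^ (-ν)) / ν) := by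
    rw [step1, step3, step4, step5]
    set W := ∫ u in (s/2)..t, s * (u ^ (-(ν+1)) * (s - u) ^ (-(ν+1)))
    linear_combination (-W) * hcancel

  -- Error bound
  rw [key]
  have htν : t ^ (-(2*ν)) * t ^ ν = t ^ (-ν) := by
    rw [← Real.rpow_add ht0]
    congr 1
    ring
  have htν2 : t ^ (-ν) * t ^ (-ν) = t ^ (-(2*ν)) := by
    rw [← Real.rpow_add ht0]
    congr 1
    ring
  have hE : s ^ (-(2*ν)) * ((t ^ ν * lam ^ (-ν) - 1)/ν) - t ^ (-ν) * ((lam ^ (-ν) - t ^ (-ν))/ν)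
      = (1/ν) * ((s ^ (-(2*ν)) - t ^ (-(2*ν))) * (t ^ ν * lam ^ (-ν) - 1)) := by
    field_simp
    linear_combination lam ^ (-ν) * htν + htν2
  rw [hE]
  have hD0 : s ^ (-(2*ν)) ≤ t ^ (-(2*ν)) :=
    Real.rpow_le_rpow_of_nonpos ht0 hst.le (by linarith)
  have hL : (0:ℝ) < lam ^ (-ν) := Real.rpow_pos_of_pos hlam _
  have hT1 : (0:ℝ) < t ^ ν := Real.rpow_pos_of_pos ht0 _
  have hR : (0:ℝ) < t ^ (-(2*ν)) := Real.rpow_pos_of_pos ht0 _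
  have hB0 : (1:ℝ) ≤ t ^ ν * lam ^ (-ν) := by
    have h1 : lam ^ ν ≤ t ^ ν := Real.rpow_le_rpow hlam.le hlt.le hν.le
    have h3 : lam ^ ν * lam ^ (-ν) = 1 := by
      rw [← Real.rpow_add hlam]; norm_num
    nlinarith
  have hlog : t ^ (-(2*ν)) - s ^ (-(2*ν)) ≤ 2*ν*lam * (t ^ (-(2*ν)) / t) := by
    have hst0 : (0:ℝ) < s / t := by positivity
    have h1 : s ^ (-(2*ν)) = t ^ (-(2*ν)) * (s/t) ^ (-(2*ν)) := by
      rw [← Real.mul_rpow ht0.le (le_of_lt hst0)]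
      congr 1
      field_simp
    have h2 : (s/t) ^ (-(2*ν)) = Real.exp (Real.log (s/t) * (-(2*ν))) :=
      Real.rpow_def_of_pos hst0 _
    have h3 : 1 + Real.log (s/t) * (-(2*ν)) ≤ (s/t) ^ (-(2*ν)) := by
      rw [h2]
      linarith [Real.add_one_le_exp (Real.log (s/t) * (-(2*ν)))]
    have h4 : Real.log (s/t) ≤ s/t - 1 := Real.log_le_sub_one_of_pos hst0
    have h5 : s/t - 1 = lam / t := by
      rw [hs]
      field_simp
      ring
    have hlogpos : 0 ≤ Real.log (s/t) := by
      apply Real.log_nonneg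
      rw [le_div_iff₀ ht0]
      linarith
    have h6 : 1 - (s/t) ^ (-(2*ν)) ≤ 2*ν*(lam/t) := by
      have h7 : Real.log (s/t) ≤ lam / t := h5 ▸ h4
      have h8 := mul_le_mul_of_nonneg_left h7 (by positivity : (0:ℝ) ≤ 2*ν)
      linarith
    have hR' : (0:ℝ) ≤ t ^ (-(2*ν)) := (Real.rpow_pos_of_pos ht0 _).le
    calc t ^ (-(2*ν)) - s ^ (-(2*ν)) = t ^ (-(2*ν)) * (1 - (s/t) ^ (-(2*ν))) := by
          rw [h1]; ring
      _ ≤ t ^ (-(2*ν)) * (2*ν*(lam/t)) := mul_le_mul_of_nonneg_left h6 hR'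
      _ = 2*ν*lam * (t ^ (-(2*ν)) / t) := by ring
  have hval : (1/ν) * ((s ^ (-(2*ν)) - t ^ (-(2*ν))) * (t ^ ν * lam ^ (-ν) - 1)) ≤ 0 := by
    have h1 : s ^ (-(2*ν)) - t ^ (-(2*ν)) ≤ 0 := by linarith
    have h2 : 0 ≤ t ^ ν * lam ^ (-ν) - 1 := by linarith
    have h3 : (0:ℝ) ≤ 1/ν := by positivity
    have h4 : (s ^ (-(2*ν)) - t ^ (-(2*ν))) * (t ^ ν * lam ^ (-ν) - 1) ≤ 0 :=
      mul_nonpos_iff.mpr (Or.inr ⟨h1, h2⟩)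
    exact mul_nonpos_of_nonneg_of_nonpos h3 h4
  rw [abs_of_nonpos hval]
  have e2 : t ^ (-ν) / t = t ^ (-(ν+1)) := by
    rw [div_eq_mul_inv, ← Real.rpow_neg_one t, ← Real.rpow_add ht0]
    congr 1
    ring
  have h6 : (t ^ (-(2*ν)) - s ^ (-(2*ν))) * (t ^ ν * lam ^ (-ν) - 1)
      ≤ (2*ν*lam * (t ^ (-(2*ν)) / t)) * (t ^ ν * lam ^ (-ν)) := by
    apply mul_le_mul hlog (by linarith) (by linarith) ?_
    have : (0:ℝ) < t ^ (-(2*ν)) / t := by positivity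
    positivity
  have h7 : (1/ν) * ((2*ν*lam * (t ^ (-(2*ν)) / t)) * (t ^ ν * lam ^ (-ν)))
      = 2 * lam * lam ^ (-ν) * t ^ (-(ν+1)) := by
    rw [← e2, ← htν]
    field_simp
  have htp : (0:ℝ) < t ^ (-(ν+1)) := Real.rpow_pos_of_pos ht0 _
  have h8 : -((1/ν) * ((s ^ (-(2*ν)) - t ^ (-(2*ν))) * (t ^ ν * lam ^ (-ν) - 1)))
      = (1/ν) * ((t ^ (-(2*ν)) - s ^ (-(2*ν))) * (t ^ ν * lam ^ (-ν) - 1)) := by ring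
  rw [h8]
  calc (1/ν) * ((t ^ (-(2*ν)) - s ^ (-(2*ν))) * (t ^ ν * lam ^ (-ν) - 1))
      ≤ (1/ν) * ((2*ν*lam * (t ^ (-(2*ν)) / t)) * (t ^ ν * lam ^ (-ν))) := by
        apply mul_le_mul_of_nonneg_left h6 (by positivity)
    _ = 2 * lam * lam ^ (-ν) * t ^ (-(ν+1)) := h7
    _ ≤ (2 * lam * lam ^ (-ν) + 1) * t ^ (-(ν+1)) := by
        have : (0:ℝ) ≤ t ^ (-(ν+1)) := htp.le
        nlinarith
end

section
/- Let ν = 1 and fix λ > 0. Then lim_{t→∞} (t² / log t) · K_1(t;λ) = 2, where K_1(t;λ) = ∫_λ^t u^{-2} ((t+λ−u)^{-1} − t^{-1}) du. -/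
open Filter

lemma K_closed (lam t : ℝ) (hlam : 0 < lam) (ht : lam < t) :
    K₁ 1 t lam = 2*(Real.log t - Real.log lam)/(t+lam)^2 - (t-lam)/(t^2*(t+lam)) := by
  have ht0 : 0 < t := hlam.trans ht
  have hs : 0 < t + lam := by linarith
  have hstep1 : K₁ 1 t lam = ∫ u in lam..t, (u^2)⁻¹ * ((t+lam-u)⁻¹ - t⁻¹) := by
    apply intervalIntegral.integral_congr
    intro u hu
    rw [Set.uIcc_of_le ht.le] at hu
    have hu0 : 0 < u := lt_of_lt_of_le hlam hu.1
    simp only []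
    rw [show (-((1:ℝ)+1)) = ((-2:ℤ):ℝ) by norm_num, Real.rpow_intCast, zpow_neg,
      Real.rpow_neg_one, Real.rpow_neg_one]
    norm_cast
  rw [hstep1]
  set G : ℝ → ℝ := fun u => (Real.log u - Real.log (t+lam-u))/(t+lam)^2
      - ((t+lam)⁻¹ - t⁻¹) * u⁻¹ with hG
  have hderiv : ∀ u ∈ Set.uIcc lam t,
      HasDerivAt G ((u^2)⁻¹ * ((t+lam-u)⁻¹ - t⁻¹)) u := by
    intro u hu
    rw [Set.uIcc_of_le ht.le] at hu
    have hu0 : 0 < u := lt_of_lt_of_le hlam hu.1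
    have hv0 : 0 < t + lam - u := by have := hu.2; linarith
    have h1 : HasDerivAt Real.log u⁻¹ u := Real.hasDerivAt_log hu0.ne'
    have h2 : HasDerivAt (fun x : ℝ => Real.log (t+lam-x)) ((t+lam-u)⁻¹ * (-1)) u :=
      (Real.hasDerivAt_log hv0.ne').comp u ((hasDerivAt_id u).const_sub (t+lam))
    have h3 : HasDerivAt (fun x : ℝ => x⁻¹) (-(u^2)⁻¹) u := hasDerivAt_inv hu0.ne'
    have h := ((h1.sub h2).div_const ((t+lam)^2)).sub (h3.const_mul ((t+lam)⁻¹ - t⁻¹))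
    refine h.congr_deriv ?_
    field_simp
    ring
  have hint : IntervalIntegrable (fun u : ℝ => (u^2)⁻¹ * ((t+lam-u)⁻¹ - t⁻¹))
      MeasureTheory.volume lam t := by
    apply ContinuousOn.intervalIntegrable
    rw [Set.uIcc_of_le ht.le]
    apply ContinuousOn.mul
    · exact (continuousOn_pow 2).inv₀ (fun u hu =>
        pow_ne_zero 2 (lt_of_lt_of_le hlam hu.1).ne')
    · exact ((continuousOn_const.sub continuousOn_id).inv₀
        (fun u hu => by have := hu.2; intro h; simp at h; linarith)).sub continuousOn_const
  rw [intervalIntegral.integral_eq_sub_of_hasDerivAt hderiv hint]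
  have e1 : t + lam - t = lam := by ring
  have e2 : t + lam - lam = t := by ring
  rw [hG]
  simp only [e1, e2]
  field_simp
  ring

theorem stmt_19 (lam : ℝ) (hlam : 0 < lam) :
    Tendsto (fun t : ℝ => t ^ 2 / Real.log t * K₁ 1 t lam) atTop (nhds 2) := by
  have hmain : Tendsto (fun t : ℝ => 2*(1 - Real.log lam / Real.log t) * (t/(t+lam))^2
      - (t-lam)/(t+lam) * (Real.log t)⁻¹) atTop (nhds 2) := by
    have hadd : Tendsto (fun t : ℝ => t + lam) atTop atTop :=
      tendsto_atTop_add_const_right atTop lam tendsto_id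
    have h1 : Tendsto (fun t : ℝ => Real.log lam / Real.log t) atTop (nhds 0) :=
      Tendsto.div_atTop tendsto_const_nhds Real.tendsto_log_atTop
    have h0 : Tendsto (fun t : ℝ => lam / (t + lam)) atTop (nhds 0) :=
      Tendsto.div_atTop tendsto_const_nhds hadd
    have h0' : Tendsto (fun t : ℝ => 2*lam / (t + lam)) atTop (nhds 0) :=
      Tendsto.div_atTop tendsto_const_nhds hadd
    have h2 : Tendsto (fun t : ℝ => t/(t+lam)) atTop (nhds 1) := by
      have := tendsto_const_nhds (x := (1:ℝ)) (f := atTop) |>.sub h0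
      rw [sub_zero] at this
      refine this.congr' ?_
      filter_upwards [eventually_gt_atTop 0] with t ht
      have : t + lam ≠ 0 := by positivity
      field_simp
      ring
    have h3 : Tendsto (fun t : ℝ => (t-lam)/(t+lam)) atTop (nhds 1) := by
      have := tendsto_const_nhds (x := (1:ℝ)) (f := atTop) |>.sub h0'
      rw [sub_zero] at this
      refine this.congr' ?_
      filter_upwards [eventually_gt_atTop 0] with t ht
      have : t + lam ≠ 0 := by positivity
      field_simp
      ring
    have h4 : Tendsto (fun t : ℝ => (Real.log t)⁻¹) atTop (nhds 0) :=
      Real.tendsto_log_atTop.inv_tendsto_atTop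
    have := ((((tendsto_const_nhds (x := (1:ℝ)) (f := atTop)).sub h1).const_mul 2).mul
      (h2.pow 2)).sub (h3.mul h4)
    convert this using 2
    norm_num
  refine hmain.congr' ?_
  filter_upwards [eventually_gt_atTop lam, eventually_gt_atTop 1] with t ht ht1
  have ht0 : 0 < t := hlam.trans ht
  have hs : (0:ℝ) < t + lam := by linarith
  have hlog : 0 < Real.log t := Real.log_pos ht1
  rw [K_closed lam t hlam ht]
  field_simp
end
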